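/- For every nonzero rational number c, the polynomial X³ − 3X − c² is irreducible over ℚ. (In particular, the equation x³ − 3x = c² has no rational solution x when c is a nonzero rational; this follows from the fact that the elliptic curve y² = x³ − 3x has only the rational points (0,0) and the point at infinity.) -/

import Mathlib

open Polynomial


private lemma zmod16_lemma : ∀ s t e : ZMod 16, s^4 - 3*e^4 = t^2 →
    e.val % 2 = 0 ∧ (s.val % 2 = t.val % 2) := by decide

private lemma zmod4_1 : ∀ s a b : ZMod 4, s^2 = 3*a^4 + 4*b^4 → s.val % 2 = 0 := by decide
private lemma zmod4_2 : ∀ s g h : ZMod 4, s^2 = g^4 + 12*h^4 → g.val % 2 = 0 → s.val % 2 = 0 := by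
  decide
private lemma zmod4_3 : ∀ g i j : ZMod 4, 3*j^4 - i^4 = g^2 →
    i.val % 2 = 0 ∧ j.val % 2 = 0 := by decide
private lemma zmod3_1 : ∀ x y : ZMod 3, x^4 + y^2 = 0 → x = 0 ∧ y = 0 := by decide

private lemma dvd2_iff16 (n : ℤ) : ((n : ZMod 16)).val % 2 = 0 ↔ (2:ℤ) ∣ n := by
  have h := ZMod.val_intCast (n := 16) n
  omega

private lemma dvd2_iff4 (n : ℤ) : ((n : ZMod 4)).val % 2 = 0 ↔ (2:ℤ) ∣ n := by
  have h := ZMod.val_intCast (n := 4) n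
  omega

private lemma dvd3_iff (n : ℤ) : ((n : ZMod 3)) = 0 ↔ (3:ℤ) ∣ n := by
  rw [ZMod.intCast_zmod_eq_zero_iff_dvd]; norm_num

private lemma not_unit_two : ¬ IsUnit (2:ℤ) := by rw [Int.isUnit_iff]; omega
private lemma not_unit_three : ¬ IsUnit (3:ℤ) := by rw [Int.isUnit_iff]; omega

private lemma not_unit_prime {p : ℕ} (hp : p.Prime) : ¬ IsUnit (p:ℤ) := by
  intro h
  rw [Int.isUnit_iff] at h
  have := hp.two_le
  omega

/-- Coprimality from absence of common prime divisors. -/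
private lemma coprime_of_no_prime {a b : ℤ}
    (h : ∀ p : ℕ, p.Prime → (p : ℤ) ∣ a → (p : ℤ) ∣ b → False) : IsCoprime a b := by
  rw [Int.isCoprime_iff_gcd_eq_one]
  by_contra hg
  have hp := Nat.minFac_prime hg
  have hd : ((Int.gcd a b).minFac : ℤ) ∣ (Int.gcd a b : ℤ) :=
    Int.natCast_dvd_natCast.2 (Nat.minFac_dvd _)
  exact h _ hp (hd.trans (Int.gcd_dvd_left a b)) (hd.trans (Int.gcd_dvd_right a b))

/-- coprime nonneg integers with product a fourth power are fourth powers -/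
private lemma exists_pow4 {u v f : ℤ} (hc : IsCoprime u v) (hu : 0 ≤ u) (hv : 0 ≤ v)
    (h : u * v = f ^ 4) : ∃ g : ℤ, 0 ≤ g ∧ u = g ^ 4 := by
  lift u to ℕ using hu
  lift v to ℕ using hv
  have hn : Nat.Coprime u v := by
    have h1 := Int.isCoprime_iff_gcd_eq_one.1 hc
    simpa [Int.gcd] using h1
  have h2 : u * v = f.natAbs ^ 4 := by
    have h3 : ((u * v : ℕ) : ℤ) = ((f.natAbs ^ 4 : ℕ) : ℤ) := by
      push_cast
      rw [h, ← abs_pow, abs_of_nonneg (show (0:ℤ) ≤ f ^ 4 by positivity)]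
    exact_mod_cast h3
  obtain ⟨d, hd⟩ := exists_eq_pow_of_mul_eq_pow (α := ℕ)
    (by rw [Nat.isUnit_iff]; exact Nat.coprime_iff_gcd_eq_one.1 hn) h2
  exact ⟨(d : ℤ), by positivity, by exact_mod_cast hd⟩

private lemma no_three {x y z : ℤ} (h : x^4 + y^2 = 3*z^4) (hc : IsCoprime x z) : False := by
  have h3 : ((x : ZMod 3))^4 + (y : ZMod 3)^2 = 0 := by
    have h0 := congrArg (fun n : ℤ => (n : ZMod 3)) h
    push_cast at h0
    rw [h0, show ((3:ZMod 3)) = 0 from by decide]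
    ring
  obtain ⟨hx, hy⟩ := zmod3_1 _ _ h3
  rw [dvd3_iff] at hx hy
  obtain ⟨x1, rfl⟩ := hx
  obtain ⟨y1, rfl⟩ := hy
  have hz4 : 3*(z^4) = 3*(3*(9*x1^4 + y1^2)) := by linear_combination -h
  have hz : (3:ℤ) ∣ z := by
    have hd : ((3:ℕ):ℤ) ∣ z^4 :=
      ⟨9*x1^4 + y1^2, by push_cast; exact mul_left_cancel₀ (by norm_num) hz4⟩
    exact Int.Prime.dvd_pow' Nat.prime_three hd
  exact not_unit_three (hc.isUnit_of_dvd' (dvd_mul_right 3 x1) hz)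

/-- First factorization step of the descent. -/
private lemma step1 {u v s f : ℤ} (huv : u * v = 12 * f ^ 4) (hsum : u + v = s ^ 2)
    (hcop : IsCoprime u v) (hu : 0 < u) (hv : 0 < v) (hf : f ≠ 0) (hsodd : ¬ (2:ℤ) ∣ s)
    (h3 : (3:ℤ) ∣ u) :
    ∃ G H : ℤ, s ^ 2 = G ^ 4 + 12 * H ^ 4 ∧ IsCoprime G H ∧ H ≠ 0 ∧ H.natAbs ≤ f.natAbs := by
  have h2uv : (2:ℤ) ∣ u ∨ (2:ℤ) ∣ v := by
    have hd : ((2:ℕ):ℤ) ∣ u * v := ⟨6*f^4, by push_cast; rw [huv]; ring⟩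
    have := Int.Prime.dvd_mul' Nat.prime_two hd
    exact_mod_cast this
  rcases h2uv with h2u | h2v
  · -- 12 ∣ u, the surviving case
    have hv2 : ¬ (2:ℤ) ∣ v := fun hdd => not_unit_two (hcop.isUnit_of_dvd' h2u hdd)
    have h4u : (4:ℤ) ∣ u := by
      have h4 : (4:ℤ) ∣ u * v := by rw [huv]; exact ⟨3*f^4, by ring⟩
      have hc2 : IsCoprime (4:ℤ) v := by
        have hcc := ((Int.prime_two.coprime_iff_not_dvd).2 hv2).pow_left (m := 2)
        norm_num at hcc
        exact hcc
      exact hc2.dvd_of_dvd_mul_right h4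
    have h12 : (12:ℤ) ∣ u := by omega
    obtain ⟨u₁, rfl⟩ := h12
    have hu₁v : u₁ * v = f ^ 4 := by
      have h12' : 12 * (u₁ * v) = 12 * f ^ 4 := by rw [← huv]; ring
      exact mul_left_cancel₀ (by norm_num) h12'
    have hcop1 : IsCoprime u₁ v := hcop.of_isCoprime_of_dvd_left ⟨12, by ring⟩
    have hu₁pos : 0 < u₁ := by nlinarith
    obtain ⟨A, hA0, hAu⟩ := exists_pow4 hcop1 hu₁pos.le hv.le hu₁v
    obtain ⟨B, hB0, hBv⟩ := exists_pow4 hcop1.symm hv.le hu₁pos.le (by rw [mul_comm]; exact hu₁v)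
    have hA : A ≠ 0 := by rintro rfl; simp at hAu; omega
    have hB : B ≠ 0 := by rintro rfl; simp at hBv; omega
    refine ⟨B, A, ?_, ?_, hA, ?_⟩
    · rw [← hsum, hAu, hBv]; try ring
    · have hpow : IsCoprime (A ^ 4) (B ^ 4) := by rw [← hAu, ← hBv]; exact hcop1
      exact ((IsCoprime.pow_left_iff (by norm_num)).1
        ((IsCoprime.pow_right_iff (by norm_num)).1 hpow)).symm
    · have h4 : (A*B) ^ 4 = f ^ 4 := by rw [mul_pow, ← hAu, ← hBv]; exact hu₁v
      have hnat : (A*B).natAbs = f.natAbs := by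
        have hc4 := congrArg Int.natAbs h4
        rw [Int.natAbs_pow, Int.natAbs_pow] at hc4
        exact Nat.pow_left_injective (by norm_num) hc4
      calc A.natAbs ≤ A.natAbs * B.natAbs :=
            Nat.le_mul_of_pos_right _ (Int.natAbs_pos.2 hB)
        _ = f.natAbs := by rw [← Int.natAbs_mul]; exact hnat
  · -- 2 ∣ v : impossible mod 4
    exfalso
    have hu2 : ¬ (2:ℤ) ∣ u := fun hdd => not_unit_two (hcop.isUnit_of_dvd' hdd h2v)
    have h4v : (4:ℤ) ∣ v := by
      have h4 : (4:ℤ) ∣ v * u := by rw [mul_comm, huv]; exact ⟨3*f^4, by ring⟩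
      have hc2 : IsCoprime (4:ℤ) u := by
        have hcc := ((Int.prime_two.coprime_iff_not_dvd).2 hu2).pow_left (m := 2)
        norm_num at hcc
        exact hcc
      exact hc2.dvd_of_dvd_mul_right h4
    obtain ⟨u₁, rfl⟩ := h3
    obtain ⟨v₁, rfl⟩ := h4v
    have hu₁v : u₁ * v₁ = f ^ 4 := by
      have h12' : 12 * (u₁ * v₁) = 12 * f ^ 4 := by rw [← huv]; ring
      exact mul_left_cancel₀ (by norm_num) h12'
    have hcop1 : IsCoprime u₁ v₁ :=
      (hcop.of_isCoprime_of_dvd_left ⟨3, by ring⟩).of_isCoprime_of_dvd_right ⟨4, by ring⟩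
    have hu₁pos : 0 < u₁ := by nlinarith
    have hv₁pos : 0 < v₁ := by nlinarith
    obtain ⟨A, hA0, hAu⟩ := exists_pow4 hcop1 hu₁pos.le hv₁pos.le hu₁v
    obtain ⟨B, hB0, hBv⟩ := exists_pow4 hcop1.symm hv₁pos.le hu₁pos.le
      (by rw [mul_comm]; exact hu₁v)
    have hs2 : s ^ 2 = 3 * A ^ 4 + 4 * B ^ 4 := by rw [← hsum, hAu, hBv]; try ring
    apply hsodd
    rw [← dvd2_iff4]
    apply zmod4_1 _ (A : ZMod 4) (B : ZMod 4)
    have h0 := congrArg (fun n : ℤ => (n : ZMod 4)) hs2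
    push_cast at h0
    exact h0

private lemma pos_pos_of_mul_pos_sum {P Q S : ℤ} (h1 : 0 < P * Q) (h2 : P + Q = S)
    (h3 : 0 < S) : 0 < P ∧ 0 < Q := by
  rcases le_or_gt P 0 with h | h
  · exfalso
    have hQ : 0 < Q := by nlinarith
    nlinarith [mul_nonneg (neg_nonneg.2 h) hQ.le]
  · refine ⟨h, ?_⟩
    rcases le_or_gt Q 0 with h' | h'
    · exfalso; nlinarith [mul_nonneg h.le (neg_nonneg.2 h')]
    · exact h'

/-- Second factorization step: produces a smaller solution of `s⁴ - 3e⁴ = t²`. -/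
private lemma step2 {s G H : ℤ} (h1 : s ^ 2 = G ^ 4 + 12 * H ^ 4) (hcop : IsCoprime G H)
    (hH : H ≠ 0) (hsodd : ¬ (2:ℤ) ∣ s) :
    ∃ s' t' e' : ℤ, IsCoprime s' e' ∧ s' ^ 4 - 3 * e' ^ 4 = t' ^ 2 ∧ e' ≠ 0 ∧
      e'.natAbs ≤ H.natAbs := by
  -- replace s by |s|
  obtain ⟨s0, hs0pos, hs0odd, h1'⟩ :
      ∃ s0 : ℤ, 0 < s0 ∧ ¬ (2:ℤ) ∣ s0 ∧ s0 ^ 2 = G ^ 4 + 12 * H ^ 4 := by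
    refine ⟨|s|, abs_pos.2 (fun h => hsodd (h ▸ dvd_zero 2)), by rwa [dvd_abs], ?_⟩
    rw [sq_abs]; exact h1
  clear h1 hsodd
  have hGodd : ¬ (2:ℤ) ∣ G := by
    intro h2G
    apply hs0odd
    rw [← dvd2_iff4]
    refine zmod4_2 _ (G : ZMod 4) (H : ZMod 4) ?_ ?_
    · have h0 := congrArg (fun n : ℤ => (n : ZMod 4)) h1'
      push_cast at h0
      exact h0
    · rw [dvd2_iff4]; exact h2G
  have hG0 : G ≠ 0 := fun h => hGodd (h ▸ dvd_zero 2)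
  -- s0 and G coprime
  have hsG : IsCoprime s0 G := by
    refine coprime_of_no_prime (fun p hp hps hpG => ?_)
    have hpH : ¬ ((p:ℤ) ∣ H) := fun hd => not_unit_prime hp (hcop.isUnit_of_dvd' hpG hd)
    have heq12 : s0 ^ 2 - G ^ 4 = 12 * H ^ 4 := by linarith
    have hd12 : (p:ℤ) ∣ 12 * H ^ 4 :=
      heq12 ▸ dvd_sub (dvd_pow hps (by norm_num)) (dvd_pow hpG (by norm_num))
    rcases Int.Prime.dvd_mul' hp hd12 with h12 | hH4'
    · have h12n : p ∣ 12 := by exact_mod_cast h12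
      have hp23 : p = 2 ∨ p = 3 := by
        have h2 := hp.two_le
        have hple := Nat.le_of_dvd (by norm_num) h12n
        interval_cases p <;> first | omega | (exfalso; revert hp; decide)
      rcases hp23 with rfl | rfl
      · exact hGodd (by exact_mod_cast hpG)
      · have h3s : (3:ℤ) ∣ s0 := by exact_mod_cast hps
        have h3G : (3:ℤ) ∣ G := by exact_mod_cast hpG
        obtain ⟨s1, hs1⟩ := h3s
        obtain ⟨g1, hg1⟩ := h3G
        rw [hs1, hg1] at heq12
        have hc3 : 3 * (4 * H ^ 4) = 3 * (3 * s1 ^ 2 - 27 * g1 ^ 4) := by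
          linear_combination -heq12
        have h4H : 4 * H ^ 4 = 3 * (s1 ^ 2 - 9 * g1 ^ 4) := by
          have := mul_left_cancel₀ (by norm_num : (3:ℤ) ≠ 0) hc3
          linarith
        have h34 : ((3:ℕ):ℤ) ∣ 4 * H ^ 4 := ⟨s1 ^ 2 - 9 * g1 ^ 4, by push_cast; linarith⟩
        rcases Int.Prime.dvd_mul' Nat.prime_three h34 with h | h
        · norm_num at h
        · exact hpH (by exact_mod_cast Int.Prime.dvd_pow' Nat.prime_three h)
    · exact hpH (Int.Prime.dvd_pow' hp hH4')
  -- split s0 ∓ G² into halves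
  obtain ⟨a, ha⟩ : ∃ a, G = 2 * a + 1 := ⟨G / 2, by omega⟩
  obtain ⟨b, hb⟩ : ∃ b, s0 = 2 * b + 1 := ⟨s0 / 2, by omega⟩
  obtain ⟨P, hP⟩ : ∃ P, s0 - G ^ 2 = 2 * P :=
    ⟨b - 2 * a ^ 2 - 2 * a, by rw [ha, hb]; ring⟩
  obtain ⟨Q, hQ⟩ : ∃ Q, s0 + G ^ 2 = 2 * Q :=
    ⟨b + 2 * a ^ 2 + 2 * a + 1, by rw [ha, hb]; ring⟩
  have hPQ : P * Q = 3 * H ^ 4 := by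
    have h4 : (2 * P) * (2 * Q) = s0 ^ 2 - G ^ 4 := by rw [← hP, ← hQ]; ring
    have h4' : 4 * (P * Q) = 12 * H ^ 4 := by linear_combination h4 + h1'
    linarith
  have hsum2 : P + Q = s0 := by linarith
  have hdiff2 : Q - P = G ^ 2 := by linarith
  have hPQpos : 0 < P * Q := by rw [hPQ]; positivity
  obtain ⟨hP0, hQ0⟩ := pos_pos_of_mul_pos_sum hPQpos hsum2 hs0pos
  have hcPQ : IsCoprime P Q := by
    refine coprime_of_no_prime (fun p hp h1p h2p => ?_)
    have hdS : (p:ℤ) ∣ s0 := hsum2 ▸ dvd_add h1p h2p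
    have hdG : (p:ℤ) ∣ G := Int.Prime.dvd_pow' hp (hdiff2 ▸ dvd_sub h2p h1p)
    exact not_unit_prime hp (hsG.isUnit_of_dvd' hdS hdG)
  have h3PQ : (3:ℤ) ∣ P ∨ (3:ℤ) ∣ Q := by
    have hd : ((3:ℕ):ℤ) ∣ P * Q := ⟨H ^ 4, by push_cast; exact hPQ⟩
    have := Int.Prime.dvd_mul' Nat.prime_three hd
    exact_mod_cast this
  rcases h3PQ with h3P | h3Q
  · -- surviving case: new solution
    obtain ⟨P₁, rfl⟩ := h3P
    have hP₁Q : P₁ * Q = H ^ 4 :=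
      mul_left_cancel₀ (by norm_num : (3:ℤ) ≠ 0) (by rw [← hPQ]; ring)
    have hcP₁Q : IsCoprime P₁ Q := hcPQ.of_isCoprime_of_dvd_left ⟨3, by ring⟩
    have hP₁pos : 0 < P₁ := by nlinarith
    obtain ⟨i, hi0, hiP⟩ := exists_pow4 hcP₁Q hP₁pos.le hQ0.le hP₁Q
    obtain ⟨j, hj0, hjQ⟩ := exists_pow4 hcP₁Q.symm hQ0.le hP₁pos.le
      (by rw [mul_comm]; exact hP₁Q)
    have hi : i ≠ 0 := by rintro rfl; simp at hiP; omega
    have hj : j ≠ 0 := by rintro rfl; simp at hjQ; omega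
    refine ⟨j, G, i, ?_, ?_, hi, ?_⟩
    · have hpow : IsCoprime (i ^ 4) (j ^ 4) := by rw [← hiP, ← hjQ]; exact hcP₁Q
      exact ((IsCoprime.pow_left_iff (by norm_num)).1
        ((IsCoprime.pow_right_iff (by norm_num)).1 hpow)).symm
    · rw [← hjQ, ← hiP]
      linarith
    · have h4 : (i * j) ^ 4 = H ^ 4 := by rw [mul_pow, ← hiP, ← hjQ]; exact hP₁Q
      have hnat : (i * j).natAbs = H.natAbs := by
        have hc4 := congrArg Int.natAbs h4
        rw [Int.natAbs_pow, Int.natAbs_pow] at hc4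
        exact Nat.pow_left_injective (by norm_num) hc4
      calc i.natAbs ≤ i.natAbs * j.natAbs :=
            Nat.le_mul_of_pos_right _ (Int.natAbs_pos.2 hj)
        _ = H.natAbs := by rw [← Int.natAbs_mul]; exact hnat
  · -- impossible case mod 4
    exfalso
    obtain ⟨Q₁, rfl⟩ := h3Q
    have hPQ₁ : P * Q₁ = H ^ 4 :=
      mul_left_cancel₀ (by norm_num : (3:ℤ) ≠ 0) (by rw [← hPQ]; ring)
    have hcPQ₁ : IsCoprime P Q₁ := hcPQ.of_isCoprime_of_dvd_right ⟨3, by ring⟩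
    have hQ₁pos : 0 < Q₁ := by nlinarith
    obtain ⟨i, hi0, hiP⟩ := exists_pow4 hcPQ₁ hP0.le hQ₁pos.le hPQ₁
    obtain ⟨j, hj0, hjQ⟩ := exists_pow4 hcPQ₁.symm hQ₁pos.le hP0.le
      (by rw [mul_comm]; exact hPQ₁)
    have hG2 : 3 * j ^ 4 - i ^ 4 = G ^ 2 := by rw [← hiP, ← hjQ]; linarith
    have hij := zmod4_3 (G : ZMod 4) (i : ZMod 4) (j : ZMod 4) (by
      have h0 := congrArg (fun n : ℤ => (n : ZMod 4)) hG2
      push_cast at h0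
      exact h0)
    rw [dvd2_iff4, dvd2_iff4] at hij
    have h2P : (2:ℤ) ∣ P := by rw [hiP]; exact dvd_pow hij.1 (by norm_num)
    have h2Q : (2:ℤ) ∣ 3 * Q₁ := by
      rw [hjQ]
      exact (dvd_pow hij.2 (by norm_num)).mul_left 3
    exact not_unit_two (hcPQ.isUnit_of_dvd' h2P h2Q)

/-- The Fermat-style descent: `s⁴ - 3e⁴ = t²` has no solution with `e ≠ 0`, `gcd(s,e)=1`. -/
private lemma descent_aux : ∀ n : ℕ, ∀ e s t : ℤ, e.natAbs = n → IsCoprime s e →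
    s ^ 4 - 3 * e ^ 4 = t ^ 2 → e = 0 := by
  intro n
  induction n using Nat.strong_induction_on with
  | _ n IH =>
  intro e s t hn hcop heq
  by_contra he
  have h3se : ¬ ((3:ℤ) ∣ s ∧ (3:ℤ) ∣ e) := by
    rintro ⟨hd1, hd2⟩
    exact not_unit_three (hcop.isUnit_of_dvd' hd1 hd2)
  -- t ≠ 0
  have ht0 : t ≠ 0 := by
    rintro rfl
    have h3s : (3:ℤ) ∣ s := by
      have : ((3:ℕ):ℤ) ∣ s ^ 4 := ⟨e ^ 4, by push_cast; linarith⟩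
      exact_mod_cast Int.Prime.dvd_pow' Nat.prime_three this
    obtain ⟨s1, rfl⟩ := h3s
    have h3e : (3:ℤ) ∣ e := by
      have hc3 : 3 * (e ^ 4) = 3 * (3 * (9 * s1 ^ 4)) := by linear_combination -heq
      have : ((3:ℕ):ℤ) ∣ e ^ 4 :=
        ⟨9 * s1 ^ 4, by push_cast; exact mul_left_cancel₀ (by norm_num) hc3⟩
      exact_mod_cast Int.Prime.dvd_pow' Nat.prime_three this
    exact h3se ⟨dvd_mul_right 3 s1, h3e⟩
  -- s and t coprime
  have hst : IsCoprime s t := by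
    refine coprime_of_no_prime (fun p hp hps hpt => ?_)
    have hd : (p:ℤ) ∣ 3 * e ^ 4 := by
      have h' : s ^ 4 - t ^ 2 = 3 * e ^ 4 := by linarith
      exact h' ▸ dvd_sub (dvd_pow hps (by norm_num)) (dvd_pow hpt (by norm_num))
    rcases Int.Prime.dvd_mul' hp hd with h3 | hpe
    · have hp3 : p = 3 := by
        have h3n : p ∣ 3 := by exact_mod_cast h3
        exact (Nat.prime_dvd_prime_iff_eq hp Nat.prime_three).1 h3n
      subst hp3
      have h3s : (3:ℤ) ∣ s := by exact_mod_cast hps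
      have h3t : (3:ℤ) ∣ t := by exact_mod_cast hpt
      obtain ⟨s1, rfl⟩ := h3s
      obtain ⟨t1, rfl⟩ := h3t
      have h3e : (3:ℤ) ∣ e := by
        have hc3 : 3 * (e ^ 4) = 3 * (3 * (9 * s1 ^ 4) - 3 * t1 ^ 2) := by
          linear_combination -heq
        have : ((3:ℕ):ℤ) ∣ e ^ 4 :=
          ⟨9 * s1 ^ 4 - t1 ^ 2, by
            have hcc := mul_left_cancel₀ ((by norm_num : (3:ℤ) ≠ 0)) hc3
            push_cast
            linarith⟩
        exact_mod_cast Int.Prime.dvd_pow' Nat.prime_three this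
      exact h3se ⟨dvd_mul_right 3 s1, h3e⟩
    · exact not_unit_prime hp (hcop.isUnit_of_dvd' hps (Int.Prime.dvd_pow' hp hpe))
  -- parity mod 16
  have h16 := zmod16_lemma (s : ZMod 16) (t : ZMod 16) (e : ZMod 16) (by
    have h0 := congrArg (fun z : ℤ => (z : ZMod 16)) heq
    push_cast at h0
    exact h0)
  have he2 : (2:ℤ) ∣ e := (dvd2_iff16 e).1 h16.1
  have hs_odd : ¬ (2:ℤ) ∣ s := by
    intro h2s
    have h2t : (2:ℤ) ∣ t := by
      rw [← dvd2_iff16] at h2s ⊢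
      rw [← h16.2]; exact h2s
    exact not_unit_two (hst.isUnit_of_dvd' h2s h2t)
  have ht_odd : ¬ (2:ℤ) ∣ t := by
    intro h2t
    apply hs_odd
    rw [← dvd2_iff16] at h2t ⊢
    rw [h16.2]; exact h2t
  obtain ⟨f, rfl⟩ := he2
  have hf : f ≠ 0 := fun h => he (by rw [h]; ring)
  obtain ⟨k, hk⟩ : ∃ k, s = 2 * k + 1 := ⟨s / 2, by omega⟩
  obtain ⟨m, hm⟩ : ∃ m, t = 2 * m + 1 := ⟨t / 2, by omega⟩
  obtain ⟨u, hu⟩ : ∃ u, s ^ 2 - t = 2 * u := ⟨2 * k ^ 2 + 2 * k - m, by rw [hk, hm]; ring⟩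
  obtain ⟨v, hv⟩ : ∃ v, s ^ 2 + t = 2 * v := ⟨2 * k ^ 2 + 2 * k + m + 1, by rw [hk, hm]; ring⟩
  have hsum : u + v = s ^ 2 := by linarith
  have hdiff : v - u = t := by linarith
  have huv : u * v = 12 * f ^ 4 := by
    have h4 : (2 * u) * (2 * v) = s ^ 4 - t ^ 2 := by rw [← hu, ← hv]; ring
    have h4' : 4 * (u * v) = 48 * f ^ 4 := by linear_combination h4 + heq
    linarith
  have huvpos : 0 < u * v := by rw [huv]; positivity
  have hs2pos : 0 < s ^ 2 := by
    have hs0 : s ≠ 0 := fun h => hs_odd (h ▸ dvd_zero 2)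
    exact lt_of_le_of_ne (sq_nonneg s) (Ne.symm (pow_ne_zero 2 hs0))
  obtain ⟨hupos, hvpos⟩ := pos_pos_of_mul_pos_sum huvpos hsum hs2pos
  have hcuv : IsCoprime u v := by
    refine coprime_of_no_prime (fun p hp h1p h2p => ?_)
    have hdS : (p:ℤ) ∣ s := Int.Prime.dvd_pow' hp (hsum ▸ dvd_add h1p h2p)
    have hdT : (p:ℤ) ∣ t := hdiff ▸ dvd_sub h2p h1p
    exact not_unit_prime hp (hst.isUnit_of_dvd' hdS hdT)
  have h3uv : (3:ℤ) ∣ u ∨ (3:ℤ) ∣ v := by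
    have hd : ((3:ℕ):ℤ) ∣ u * v := ⟨4 * f ^ 4, by push_cast; rw [huv]; ring⟩
    have := Int.Prime.dvd_mul' Nat.prime_three hd
    exact_mod_cast this
  have hmain : ∃ G H : ℤ, s ^ 2 = G ^ 4 + 12 * H ^ 4 ∧ IsCoprime G H ∧ H ≠ 0 ∧
      H.natAbs ≤ f.natAbs := by
    rcases h3uv with h3u | h3v
    · exact step1 huv hsum hcuv hupos hvpos hf hs_odd h3u
    · exact step1 (by rw [mul_comm]; exact huv) (by rw [add_comm]; exact hsum)
        hcuv.symm hvpos hupos hf hs_odd h3v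
  obtain ⟨G, H, hGH1, hGH2, hGH3, hGH4⟩ := hmain
  obtain ⟨s', t', e', hc', heq', he'0, hle⟩ := step2 hGH1 hGH2 hGH3 hs_odd
  have hlt : e'.natAbs < n := by
    have h2f : (2 * f).natAbs = 2 * f.natAbs := by simp [Int.natAbs_mul]
    have hf1 : 1 ≤ f.natAbs := Int.natAbs_pos.2 hf
    omega
  exact he'0 (IH _ hlt e' s' t' rfl hc' heq')

/-- No nontrivial solutions of `s⁴ - 3e⁴ = t²` with `s, e` coprime. -/
private lemma descent {e s t : ℤ} (hcop : IsCoprime s e) (heq : s ^ 4 - 3 * e ^ 4 = t ^ 2) :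
    e = 0 :=
  descent_aux e.natAbs e s t rfl hcop heq
/-- The equation `n² = ab(a²-3b²)` has no solutions with `n ≠ 0`, `b > 0`, `gcd(a,b)=1`. -/
private lemma int_no_sol {n a b : ℤ} (hn : n ≠ 0) (hb : 0 < b) (hcop : IsCoprime a b)
    (h : n ^ 2 = a * b * (a ^ 2 - 3 * b ^ 2)) : False := by
  have ha0 : a ≠ 0 := by
    rintro rfl
    apply hn
    have hzz : n ^ 2 = 0 := by rw [h]; ring
    exact pow_eq_zero_iff two_ne_zero |>.1 hzz
  have hn2 : 0 < n ^ 2 := lt_of_le_of_ne (sq_nonneg n) (Ne.symm (pow_ne_zero 2 hn))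
  have hprod : 0 < a * (a ^ 2 - 3 * b ^ 2) := by
    by_contra hX
    push_neg at hX
    nlinarith [mul_nonneg (neg_nonneg.2 hX) hb.le]
  by_cases h3a : (3:ℤ) ∣ a
  · -- 3 ∣ a
    obtain ⟨a₂, rfl⟩ := h3a
    have h3b : ¬ (3:ℤ) ∣ b := fun hd =>
      not_unit_three (hcop.isUnit_of_dvd' (dvd_mul_right 3 a₂) hd)
    have h3n : (3:ℤ) ∣ n := by
      have hh : ((3:ℕ):ℤ) ∣ n ^ 2 :=
        ⟨a₂ * b * (9 * a₂ ^ 2 - 3 * b ^ 2), by push_cast; linear_combination h⟩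
      exact_mod_cast Int.Prime.dvd_pow' Nat.prime_three hh
    obtain ⟨n₁, rfl⟩ := h3n
    have h9 : 9 * (n₁ ^ 2) = 9 * (a₂ * b * (3 * a₂ ^ 2 - b ^ 2)) := by linear_combination h
    have h' : n₁ ^ 2 = a₂ * b * (3 * a₂ ^ 2 - b ^ 2) :=
      mul_left_cancel₀ (by norm_num) h9
    have hn₁ : n₁ ≠ 0 := fun hz => hn (by rw [hz]; ring)
    have hca₂b : IsCoprime a₂ b := hcop.of_isCoprime_of_dvd_left ⟨3, by ring⟩
    have ha₂0 : a₂ ≠ 0 := by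
      rintro rfl
      apply hn₁
      have hzz : n₁ ^ 2 = 0 := by rw [h']; ring
      exact pow_eq_zero_iff two_ne_zero |>.1 hzz
    have hn₁2 : 0 < n₁ ^ 2 := lt_of_le_of_ne (sq_nonneg n₁) (Ne.symm (pow_ne_zero 2 hn₁))
    have hprod2 : 0 < a₂ * (3 * a₂ ^ 2 - b ^ 2) := by
      by_contra hX
      push_neg at hX
      nlinarith [mul_nonneg (neg_nonneg.2 hX) hb.le, h']
    have hc1 : IsCoprime a₂ (3 * a₂ ^ 2 - b ^ 2) := by
      refine coprime_of_no_prime (fun p hp hpa hpd => ?_)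
      have hpb : (p:ℤ) ∣ b ^ 2 := by
        have hh : 3 * a₂ ^ 2 - (3 * a₂ ^ 2 - b ^ 2) = b ^ 2 := by ring
        exact hh ▸ dvd_sub (Dvd.dvd.mul_left (dvd_pow hpa two_ne_zero) 3) hpd
      exact not_unit_prime hp (hca₂b.isUnit_of_dvd' hpa (Int.Prime.dvd_pow' hp hpb))
    have hc2 : IsCoprime b (3 * a₂ ^ 2 - b ^ 2) := by
      refine coprime_of_no_prime (fun p hp hpb hpd => ?_)
      have hpa3 : (p:ℤ) ∣ 3 * a₂ ^ 2 := by
        have hh : (3 * a₂ ^ 2 - b ^ 2) + b ^ 2 = 3 * a₂ ^ 2 := by ring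
        exact hh ▸ dvd_add hpd (dvd_pow hpb two_ne_zero)
      rcases Int.Prime.dvd_mul' hp hpa3 with h3 | ha2
      · have hp3 : p = 3 :=
          (Nat.prime_dvd_prime_iff_eq hp Nat.prime_three).1 (by exact_mod_cast h3)
        subst hp3
        exact h3b (by exact_mod_cast hpb)
      · exact not_unit_prime hp (hca₂b.isUnit_of_dvd' (Int.Prime.dvd_pow' hp ha2) hpb)
    obtain ⟨α, hα⟩ := Int.sq_of_isCoprime (hca₂b.mul_right hc1)
      (show a₂ * (b * (3 * a₂ ^ 2 - b ^ 2)) = n₁ ^ 2 by rw [h']; ring)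
    obtain ⟨β, hβ⟩ := Int.sq_of_isCoprime (hca₂b.symm.mul_right hc2)
      (show b * (a₂ * (3 * a₂ ^ 2 - b ^ 2)) = n₁ ^ 2 by rw [h']; ring)
    obtain ⟨γ, hγ⟩ := Int.sq_of_isCoprime (hc1.symm.mul_right hc2.symm)
      (show (3 * a₂ ^ 2 - b ^ 2) * (a₂ * b) = n₁ ^ 2 by rw [h']; ring)
    have hbβ : b = β ^ 2 := by
      rcases hβ with h'' | h''
      · exact h''
      · exfalso; nlinarith [sq_nonneg β]
    have hβ0 : β ≠ 0 := by rintro rfl; simp at hbβ; omega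
    have hαa : α ∣ a₂ := by
      rcases hα with h'' | h''
      · exact ⟨α, by rw [h'']; ring⟩
      · exact ⟨-α, by rw [h'']; ring⟩
    have hcαβ : IsCoprime α β :=
      (hca₂b.of_isCoprime_of_dvd_left hαa).of_isCoprime_of_dvd_right ⟨β, by rw [hbβ]; ring⟩
    rcases hα with hα | hα
    · have hapos : 0 < a₂ := lt_of_le_of_ne (hα ▸ sq_nonneg α) (Ne.symm ha₂0)
      have hdpos : 0 < 3 * a₂ ^ 2 - b ^ 2 := by
        by_contra hX
        push_neg at hX
        nlinarith [hprod2, mul_nonneg hapos.le (neg_nonneg.2 hX)]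
      have hγ' : 3 * a₂ ^ 2 - b ^ 2 = γ ^ 2 := by
        rcases hγ with h'' | h''
        · exact h''
        · exfalso; nlinarith [sq_nonneg γ]
      rw [hα, hbβ] at hγ'
      have heq4 : β ^ 4 + γ ^ 2 = 3 * α ^ 4 := by linear_combination -hγ'
      exact no_three heq4 hcαβ.symm
    · have haneg : a₂ < 0 := lt_of_le_of_ne (hα ▸ neg_nonpos.2 (sq_nonneg α)) ha₂0
      have hdneg : 3 * a₂ ^ 2 - b ^ 2 < 0 := by
        by_contra hX
        push_neg at hX
        nlinarith [hprod2, mul_nonneg (neg_nonneg.2 haneg.le) hX]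
      have hγ' : 3 * a₂ ^ 2 - b ^ 2 = -γ ^ 2 := by
        rcases hγ with h'' | h''
        · exfalso; nlinarith [sq_nonneg γ]
        · exact h''
      rw [hα, hbβ] at hγ'
      have heq4 : β ^ 4 - 3 * α ^ 4 = γ ^ 2 := by linear_combination -hγ'
      exact ha₂0 (by rw [hα, descent hcαβ.symm heq4]; ring)
  · -- 3 ∤ a
    have hc1 : IsCoprime a (a ^ 2 - 3 * b ^ 2) := by
      refine coprime_of_no_prime (fun p hp hpa hpd => ?_)
      have hp3b : (p:ℤ) ∣ 3 * b ^ 2 := by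
        have hh : a ^ 2 - (a ^ 2 - 3 * b ^ 2) = 3 * b ^ 2 := by ring
        exact hh ▸ dvd_sub (dvd_pow hpa two_ne_zero) hpd
      rcases Int.Prime.dvd_mul' hp hp3b with h3 | hb2
      · have hp3 : p = 3 :=
          (Nat.prime_dvd_prime_iff_eq hp Nat.prime_three).1 (by exact_mod_cast h3)
        subst hp3
        exact h3a (by exact_mod_cast hpa)
      · exact not_unit_prime hp (hcop.isUnit_of_dvd' hpa (Int.Prime.dvd_pow' hp hb2))
    have hc2 : IsCoprime b (a ^ 2 - 3 * b ^ 2) := by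
      refine coprime_of_no_prime (fun p hp hpb hpd => ?_)
      have hpa2 : (p:ℤ) ∣ a ^ 2 := by
        have hh : (a ^ 2 - 3 * b ^ 2) + 3 * b ^ 2 = a ^ 2 := by ring
        exact hh ▸ dvd_add hpd (Dvd.dvd.mul_left (dvd_pow hpb two_ne_zero) 3)
      exact not_unit_prime hp (hcop.isUnit_of_dvd' (Int.Prime.dvd_pow' hp hpa2) hpb)
    obtain ⟨α, hα⟩ := Int.sq_of_isCoprime (hcop.mul_right hc1)
      (show a * (b * (a ^ 2 - 3 * b ^ 2)) = n ^ 2 by rw [h]; ring)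
    obtain ⟨β, hβ⟩ := Int.sq_of_isCoprime (hcop.symm.mul_right hc2)
      (show b * (a * (a ^ 2 - 3 * b ^ 2)) = n ^ 2 by rw [h]; ring)
    obtain ⟨γ, hγ⟩ := Int.sq_of_isCoprime (hc1.symm.mul_right hc2.symm)
      (show (a ^ 2 - 3 * b ^ 2) * (a * b) = n ^ 2 by rw [h]; ring)
    have hbβ : b = β ^ 2 := by
      rcases hβ with h'' | h''
      · exact h''
      · exfalso; nlinarith [sq_nonneg β]
    have hβ0 : β ≠ 0 := by rintro rfl; simp at hbβ; omega
    have hαa : α ∣ a := by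
      rcases hα with h'' | h''
      · exact ⟨α, by rw [h'']; ring⟩
      · exact ⟨-α, by rw [h'']; ring⟩
    have hcαβ : IsCoprime α β :=
      (hcop.of_isCoprime_of_dvd_left hαa).of_isCoprime_of_dvd_right ⟨β, by rw [hbβ]; ring⟩
    rcases hα with hα | hα
    · have hapos : 0 < a := lt_of_le_of_ne (hα ▸ sq_nonneg α) (Ne.symm ha0)
      have hdpos : 0 < a ^ 2 - 3 * b ^ 2 := by
        by_contra hX
        push_neg at hX
        nlinarith [hprod, mul_nonneg hapos.le (neg_nonneg.2 hX)]
      have hγ' : a ^ 2 - 3 * b ^ 2 = γ ^ 2 := by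
        rcases hγ with h'' | h''
        · exact h''
        · exfalso; nlinarith [sq_nonneg γ]
      rw [hα, hbβ] at hγ'
      have heq4 : α ^ 4 - 3 * β ^ 4 = γ ^ 2 := by linear_combination hγ'
      exact hβ0 (descent hcαβ heq4)
    · have haneg : a < 0 := lt_of_le_of_ne (hα ▸ neg_nonpos.2 (sq_nonneg α)) ha0
      have hdneg : a ^ 2 - 3 * b ^ 2 < 0 := by
        by_contra hX
        push_neg at hX
        nlinarith [hprod, mul_nonneg (neg_nonneg.2 haneg.le) hX]
      have hγ' : a ^ 2 - 3 * b ^ 2 = -γ ^ 2 := by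
        rcases hγ with h'' | h''
        · exfalso; nlinarith [sq_nonneg γ]
        · exact h''
      rw [hα, hbβ] at hγ'
      have heq4 : α ^ 4 + γ ^ 2 = 3 * β ^ 4 := by linear_combination hγ'
      exact no_three heq4 hcαβ
/-- No rational point with `y ≠ 0` on `y² = x³ - 3x`. -/
private lemma rat_no_sol (x y : ℚ) (hy : y ≠ 0) (h : y ^ 2 = x ^ 3 - 3 * x) : False := by
  set a : ℤ := x.num with ha
  set b : ℤ := (x.den : ℤ) with hbdef
  have hb0 : 0 < b := by rw [hbdef]; exact_mod_cast x.pos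
  have hbQ : ((b : ℚ)) ≠ 0 := by
    simp only [ne_eq, Int.cast_eq_zero]
    omega
  have hcop : IsCoprime a b := by
    rw [Int.isCoprime_iff_gcd_eq_one]
    have hred := x.reduced
    simpa [Int.gcd, ha, hbdef] using hred
  have hx' : (a : ℚ) = x * (b : ℚ) := by
    rw [ha, hbdef]
    push_cast
    exact (Rat.mul_den_eq_num x).symm
  set N : ℚ := y * (b : ℚ) ^ 2 with hN
  have key : N ^ 2 = ((a * b * (a ^ 2 - 3 * b ^ 2) : ℤ) : ℚ) := by
    calc N ^ 2 = y ^ 2 * (b : ℚ) ^ 4 := by rw [hN]; ring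
      _ = (x ^ 3 - 3 * x) * (b : ℚ) ^ 4 := by rw [h]
      _ = ((x * b) * b * ((x * b) ^ 2 - 3 * b ^ 2)) := by ring
      _ = ((a * b * (a ^ 2 - 3 * b ^ 2) : ℤ) : ℚ) := by push_cast; rw [hx']
  have hden : N.den = 1 := by
    have h1 : (N ^ 2).den = 1 := by rw [key]; exact Rat.den_intCast _
    rw [Rat.den_pow] at h1
    rw [pow_eq_one_iff] at h1
    exact h1.resolve_right two_ne_zero
  have hNum : ((N.num : ℚ)) = N := Rat.coe_int_num_of_den_eq_one hden
  have hn2 : N.num ^ 2 = a * b * (a ^ 2 - 3 * b ^ 2) := by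
    have hcast : ((N.num ^ 2 : ℤ) : ℚ) = ((a * b * (a ^ 2 - 3 * b ^ 2) : ℤ) : ℚ) := by
      push_cast
      rw [hNum]
      push_cast at key
      exact key
    exact_mod_cast hcast
  have hnz : N.num ≠ 0 := by
    intro h0
    apply hy
    have hNz : N = 0 := by rw [← hNum, h0]; simp
    rw [hN] at hNz
    rcases mul_eq_zero.mp hNz with h' | h'
    · exact h'
    · exact absurd (pow_eq_zero_iff two_ne_zero |>.1 h') hbQ
  exact int_no_sol hnz hb0 hcop hn2


/-- For every nonzero rational number `c`, the polynomial `X³ - 3X - c²` is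
irreducible over `ℚ`. -/
theorem irreducible_X_cubed_sub_three_X_sub_sq (c : ℚ) (hc : c ≠ 0) :
    Irreducible (X ^ 3 - 3 * X - C (c ^ 2) : Polynomial ℚ) := by
  have hdeg : (X ^ 3 - 3 * X - C (c ^ 2) : Polynomial ℚ).natDegree = 3 := by
    compute_degree!
  rw [Polynomial.irreducible_iff_roots_eq_zero_of_degree_le_three (by omega) (by omega)]
  by_contra hroots
  obtain ⟨r, hr⟩ := Multiset.exists_mem_of_ne_zero hroots
  have hp0 : (X ^ 3 - 3 * X - C (c ^ 2) : Polynomial ℚ) ≠ 0 := fun h0 => by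
    rw [h0] at hdeg
    simp at hdeg
  rw [Polynomial.mem_roots hp0] at hr
  have heval := hr
  simp only [Polynomial.IsRoot, Polynomial.eval_sub, Polynomial.eval_pow, Polynomial.eval_mul,
    Polynomial.eval_X, Polynomial.eval_C, Polynomial.eval_ofNat] at heval
  exact rat_no_sol r c hc (by linarith)
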